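/- Let x = x_1,…,x_k be an M-regular sequence and y ∈ R such that M/xM is of bounded y-torsion. Then the sequence x_1,…,x_k,y is M-proregular. -/

import Mathlib

/-- `x : Fin k → R` is an `M`-regular sequence. -/
def IsRegularSeq {R : Type*} [CommRing R] (M : Type*) [AddCommGroup M] [Module R M]
    {k : ℕ} (x : Fin k → R) : Prop :=
  ∀ i : Fin k, ∀ z : M,
    x i • z ∈ (Ideal.span (x '' {j | j < i})) • (⊤ : Submodule R M) →
      z ∈ (Ideal.span (x '' {j | j < i})) • (⊤ : Submodule R M)

/-- A sequence `z : Fin l → R` is `M`-proregular (Lipman's definition). -/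
def IsProregular {R : Type*} [CommRing R] (M : Type*) [AddCommGroup M] [Module R M]
    {l : ℕ} (z : Fin l → R) : Prop :=
  ∀ i : Fin l, ∀ n : ℕ, ∃ m : ℕ, n ≤ m ∧
    ((Ideal.span ((fun j => z j ^ m) '' {j | j < i})) • (⊤ : Submodule R M)).comap
        (LinearMap.lsmul R M (z i ^ m)) ≤
      ((Ideal.span ((fun j => z j ^ n) '' {j | j < i})) • (⊤ : Submodule R M)).comap
        (LinearMap.lsmul R M (z i ^ (m - n)))

section ProregularAux

variable {R : Type*} [CommRing R] (M : Type*) [AddCommGroup M] [Module R M]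

/-- The ideal generated by the elements of a list. -/
def spanL (l : List R) : Ideal R := Ideal.span {a | a ∈ l}

variable {M}

lemma spanL_nil : spanL ([] : List R) = ⊥ := by
  have : {a | a ∈ ([] : List R)} = (∅ : Set R) := by ext a; simp
  rw [spanL, this, Ideal.span_empty]

lemma spanL_cons (a : R) (l : List R) :
    spanL (a :: l) = Ideal.span {a} ⊔ spanL l := by
  have : {b | b ∈ a :: l} = insert a {b | b ∈ l} := by ext b; simp
  rw [spanL, this, Ideal.span_insert, spanL]

/-- Membership in `span {r} • ⊤`. -/
lemma mem_spanSingleton_smul_top {r : R} {m : M} :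
    m ∈ Ideal.span {r} • (⊤ : Submodule R M) ↔ ∃ z : M, r • z = m := by
  constructor
  · intro h
    refine Submodule.smul_induction_on h ?_ ?_
    · intro r' hr' n _
      obtain ⟨c, rfl⟩ := Ideal.mem_span_singleton'.mp hr'
      exact ⟨c • n, by rw [smul_smul, mul_comm]⟩
    · rintro m1 m2 ⟨z1, h1⟩ ⟨z2, h2⟩
      exact ⟨z1 + z2, by rw [smul_add, h1, h2]⟩
  · rintro ⟨z, rfl⟩
    exact Submodule.smul_mem_smul (Ideal.subset_span rfl) trivial

lemma mem_three {J P : Ideal R} {r : R} {m : M} :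
    m ∈ (J ⊔ Ideal.span {r} ⊔ P) • (⊤ : Submodule R M) ↔
      ∃ e ∈ J • (⊤ : Submodule R M), ∃ z : M,
        ∃ w ∈ P • (⊤ : Submodule R M), m = e + r • z + w := by
  rw [Submodule.sup_smul, Submodule.sup_smul]
  constructor
  · intro h
    obtain ⟨s, hs, w, hw, hsum⟩ := Submodule.mem_sup.mp h
    obtain ⟨e, he, t, ht, h2⟩ := Submodule.mem_sup.mp hs
    obtain ⟨z, hz⟩ := mem_spanSingleton_smul_top.mp ht
    exact ⟨e, he, z, w, hw, by rw [← hsum, ← h2, hz]⟩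
  · rintro ⟨e, he, z, w, hw, rfl⟩
    exact add_mem (add_mem (Submodule.mem_sup_left (Submodule.mem_sup_left he))
      (Submodule.mem_sup_left (Submodule.mem_sup_right
        (mem_spanSingleton_smul_top.mpr ⟨z, rfl⟩)))) (Submodule.mem_sup_right hw)

lemma mem_two {J P : Ideal R} {m : M} :
    m ∈ (J ⊔ P) • (⊤ : Submodule R M) ↔
      ∃ e ∈ J • (⊤ : Submodule R M), ∃ w ∈ P • (⊤ : Submodule R M), m = e + w := by
  rw [Submodule.sup_smul]
  constructor
  · intro h
    obtain ⟨e, he, w, hw, hsum⟩ := Submodule.mem_sup.mp h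
    exact ⟨e, he, w, hw, hsum.symm⟩
  · rintro ⟨e, he, w, hw, rfl⟩
    exact add_mem (Submodule.mem_sup_left he) (Submodule.mem_sup_right hw)

variable (M) in
/-- `l` is a regular sequence on `M` over the base ideal `J` (i.e. on `M/JM`). -/
def RegOverL (J : Ideal R) : List R → Prop
  | [] => True
  | a :: l => (∀ z : M, a • z ∈ J • (⊤ : Submodule R M) → z ∈ J • (⊤ : Submodule R M)) ∧
      RegOverL (J ⊔ Ideal.span {a}) l

lemma regOverL_take {J : Ideal R} : ∀ (l : List R), RegOverL M J l → ∀ i, RegOverL M J (l.take i)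
  | [], _, _ => by simp [RegOverL]
  | a :: l, h, 0 => by simp [RegOverL]
  | a :: l, h, (i+1) => ⟨h.1, regOverL_take l h.2 i⟩

lemma regOverL_split {J : Ideal R} {l : List R} (h : RegOverL M J l) :
    ∀ p a l', l = p ++ a :: l' → ∀ z : M,
      a • z ∈ (J ⊔ spanL p) • (⊤ : Submodule R M) → z ∈ (J ⊔ spanL p) • (⊤ : Submodule R M) := by
  induction l generalizing J with
  | nil => intro p a l' hp; exact absurd hp (by simp)
  | cons b l ih =>
    intro p a l' hp z hz
    match p, hp with
    | [], hp =>
      rw [spanL_nil, sup_bot_eq] at hz ⊢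
      obtain ⟨rfl, rfl⟩ : b = a ∧ l = l' := by simpa using hp
      exact h.1 z hz
    | (b' :: p'), hp =>
      obtain ⟨rfl, hl⟩ : b = b' ∧ l = p' ++ a :: l' := by simpa using hp
      rw [spanL_cons, ← sup_assoc] at hz ⊢
      exact ih h.2 p' a l' hl z hz

lemma regOverL_of_split {J : Ideal R} {l : List R}
    (H : ∀ p a l', l = p ++ a :: l' → ∀ z : M,
      a • z ∈ (J ⊔ spanL p) • (⊤ : Submodule R M) → z ∈ (J ⊔ spanL p) • (⊤ : Submodule R M)) :
    RegOverL M J l := by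
  induction l generalizing J with
  | nil => trivial
  | cons b l ih =>
    constructor
    · have h0 := H [] b l rfl
      rw [spanL_nil, sup_bot_eq] at h0
      exact h0
    · apply ih
      intro p a l' hsplit z
      have h1 := H (b :: p) a l' (by rw [hsplit]; rfl) z
      rw [spanL_cons, ← sup_assoc] at h1
      exact h1

lemma reg_pow_head {J : Ideal R} {a : R}
    (h : ∀ z : M, a • z ∈ J • (⊤ : Submodule R M) → z ∈ J • (⊤ : Submodule R M)) :
    ∀ n, ∀ z : M, a ^ n • z ∈ J • (⊤ : Submodule R M) → z ∈ J • (⊤ : Submodule R M) := by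
  intro n
  induction n with
  | zero => intro z hz; rwa [pow_zero, one_smul] at hz
  | succ n ih =>
    intro z hz
    rw [pow_succ, mul_smul] at hz
    exact h z (ih _ hz)





lemma spanL_append (l1 l2 : List R) : spanL (l1 ++ l2) = spanL l1 ⊔ spanL l2 := by
  have : {a | a ∈ l1 ++ l2} = {a | a ∈ l1} ∪ {a | a ∈ l2} := by ext a; simp
  rw [spanL, this, Ideal.span_union, spanL, spanL]

lemma spanL_singleton (a : R) : spanL [a] = Ideal.span {a} := by
  rw [spanL_cons, spanL_nil, sup_bot_eq]

lemma int_lemma {J : Ideal R} {x1 : R} (p : List R) (h : RegOverL M J (x1 :: p)) :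
    ∀ b', ∀ w : M,
      x1 • w ∈ (J ⊔ Ideal.span {x1 ^ (b' + 1)} ⊔ spanL p) • (⊤ : Submodule R M) →
      w ∈ (J ⊔ Ideal.span {x1 ^ b'} ⊔ spanL p) • (⊤ : Submodule R M) := by
  induction p using List.reverseRecOn with
  | nil =>
    intro b' w hw
    obtain ⟨e, he, u, w0, hw0, hsum⟩ := mem_three.mp hw
    have hle : spanL ([] : List R) ≤ J := by rw [spanL_nil]; exact bot_le
    have key : x1 • (w - x1 ^ b' • u) = e + w0 := by
      rw [smul_sub, hsum, smul_smul, ← pow_succ']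
      abel
    have hmem : w - x1 ^ b' • u ∈ J • (⊤ : Submodule R M) :=
      h.1 _ (key ▸ add_mem he (Submodule.smul_mono_left hle hw0))
    exact mem_three.mpr ⟨_, hmem, u, 0, zero_mem _, by abel⟩
  | append_singleton p' xi ih =>
    intro b' w hw
    have hdrop : RegOverL M J (x1 :: p') := by
      have := regOverL_take _ h (p'.length + 1)
      simpa [List.take_left] using this
    have hlast := regOverL_split h (x1 :: p') xi [] (by simp)
    simp only [spanL_cons, ← sup_assoc] at hlast
    simp only [spanL_append, spanL_singleton, ← sup_assoc] at hw
    obtain ⟨E, hE, w1, hw1, hsum⟩ := mem_two.mp hw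
    obtain ⟨ui, hui⟩ := mem_spanSingleton_smul_top.mp hw1
    rw [← hui] at hsum
    -- xi • ui ∈ (J ⊔ span{x1} ⊔ spanL p') • ⊤
    have hpow_le : Ideal.span {x1 ^ (b' + 1)} ≤ Ideal.span {x1} :=
      Ideal.span_singleton_le_span_singleton.mpr (dvd_pow_self x1 (Nat.succ_ne_zero b'))
    have hstep1 : xi • ui ∈ (J ⊔ Ideal.span {x1} ⊔ spanL p') • (⊤ : Submodule R M) := by
      have hx1w : x1 • w ∈ (J ⊔ Ideal.span {x1} ⊔ spanL p') • (⊤ : Submodule R M) :=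
        mem_three.mpr ⟨0, zero_mem _, w, 0, zero_mem _, by abel⟩
      have hE' : E ∈ (J ⊔ Ideal.span {x1} ⊔ spanL p') • (⊤ : Submodule R M) :=
        Submodule.smul_mono_left (sup_le_sup_right (sup_le_sup_left hpow_le J) _) hE
      have : xi • ui = x1 • w - E := by rw [hsum]; abel
      rw [this]
      exact sub_mem hx1w hE'
    obtain ⟨e', he', a, w'', hw'', huia⟩ := mem_three.mp (hlast ui hstep1)
    have hxa : x1 • a = ui - e' - w'' := by rw [huia]; abel
    have hstep2 : x1 • (w - xi • a) ∈
        (J ⊔ Ideal.span {x1 ^ (b' + 1)} ⊔ spanL p') • (⊤ : Submodule R M) := by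
      have hcomp : x1 • (w - xi • a) = E + (xi • e' + xi • w'') := by
        rw [smul_sub, hsum, smul_comm x1 xi a, hxa, smul_sub, smul_sub]
        abel
      rw [hcomp]
      exact add_mem hE (mem_three.mpr
        ⟨xi • e', Submodule.smul_mem _ _ he', 0, xi • w'', Submodule.smul_mem _ _ hw'', by rw [smul_zero]; abel⟩)
    have hres := ih hdrop b' (w - xi • a) hstep2
    rw [spanL_append, spanL_singleton, ← sup_assoc, Submodule.sup_smul]
    have hxi : xi • a ∈ Ideal.span {xi} • (⊤ : Submodule R M) :=
      mem_spanSingleton_smul_top.mpr ⟨a, rfl⟩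
    have hfin := Submodule.add_mem_sup hres hxi
    rwa [sub_add_cancel] at hfin

lemma int_iter {J : Ideal R} {x1 : R} (p : List R) (h : RegOverL M J (x1 :: p)) :
    ∀ s b, s ≤ b → ∀ w : M,
      x1 ^ s • w ∈ (J ⊔ Ideal.span {x1 ^ b} ⊔ spanL p) • (⊤ : Submodule R M) →
      w ∈ (J ⊔ Ideal.span {x1 ^ (b - s)} ⊔ spanL p) • (⊤ : Submodule R M) := by
  intro s
  induction s with
  | zero => intro b _ w hw; rwa [pow_zero, one_smul] at hw
  | succ s ih =>
    intro b hsb w hw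
    rw [pow_succ, mul_smul] at hw
    have h1 := ih b (by omega) (x1 • w) hw
    have heq : b - s = (b - (s + 1)) + 1 := by omega
    rw [heq] at h1
    exact int_lemma p h _ w h1

lemma raise {J : Ideal R} {x1 : R} {l : List R} (h : RegOverL M J (x1 :: l)) :
    ∀ a, 1 ≤ a → RegOverL M (J ⊔ Ideal.span {x1 ^ a}) l := by
  intro a ha
  induction a with
  | zero => omega
  | succ a ih =>
    rcases Nat.eq_zero_or_pos a with rfl | ha'
    · rw [zero_add, pow_one]
      exact h.2
    · have hprev := ih ha'
      apply regOverL_of_split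
      intro p xi l' hsplit z hz
      -- views of the regularity hypotheses at this position
      have hC := regOverL_split hprev p xi l' hsplit
      have horig := regOverL_split h.2 p xi l' hsplit
      have hxp : RegOverL M J (x1 :: p) := by
        refine ⟨h.1, ?_⟩
        have := regOverL_take _ h.2 p.length
        rwa [hsplit, List.take_left] at this
      rw [sup_assoc] at hz ⊢
      rw [sup_assoc] at hC
      -- hz : xi • z ∈ (J ⊔ (span{x1^(a+1)} ⊔ spanL p)) • ⊤ ... undo: keep left-assoc
      rw [← sup_assoc] at hz hC ⊢
      -- decompose hz
      obtain ⟨e, he, u, w, hwmem, hsum⟩ := mem_three.mp hz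
      have hz' : xi • z ∈ (J ⊔ Ideal.span {x1 ^ a} ⊔ spanL p) • (⊤ : Submodule R M) := by
        refine mem_three.mpr ⟨e, he, x1 • u, w, hwmem, ?_⟩
        rw [hsum, smul_smul, ← pow_succ]
      obtain ⟨e', he', v, w', hw'mem, hzeq⟩ := mem_three.mp (hC z hz')
      -- x1^a • (xi • v - x1 • u) ∈ (J ⊔ spanL p) • ⊤ ⊆ (J ⊔ span{x1^(a+1)} ⊔ spanL p) • ⊤
      have h1 : xi • z = xi • e' + x1 ^ a • (xi • v) + xi • w' := by
        rw [hzeq, smul_add, smul_add, smul_comm xi (x1 ^ a) v]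
      have h3 : xi • e' + x1 ^ a • (xi • v) + xi • w' = e + x1 ^ (a + 1) • u + w :=
        h1.symm.trans hsum
      have hkey : x1 ^ a • (xi • v - x1 • u) ∈
          (J ⊔ Ideal.span {x1 ^ (a + 1)} ⊔ spanL p) • (⊤ : Submodule R M) := by
        have h2 : x1 ^ a • (x1 • u) = x1 ^ (a + 1) • u := by
          rw [smul_smul, ← pow_succ]
        have hcomp : x1 ^ a • (xi • v - x1 • u) =
            (e - xi • e') + x1 ^ (a + 1) • (0 : M) + (w - xi • w') := by
          calc x1 ^ a • (xi • v - x1 • u)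
              = (xi • e' + x1 ^ a • (xi • v) + xi • w') - xi • e' - xi • w'
                  - x1 ^ (a + 1) • u := by rw [smul_sub, h2]; abel
            _ = (e + x1 ^ (a + 1) • u + w) - xi • e' - xi • w' - x1 ^ (a + 1) • u := by
                  rw [h3]
            _ = (e - xi • e') + x1 ^ (a + 1) • (0 : M) + (w - xi • w') := by
                  rw [smul_zero]; abel
        exact mem_three.mpr ⟨e - xi • e', sub_mem he (Submodule.smul_mem _ _ he'),
          (0 : M), w - xi • w', sub_mem hwmem (Submodule.smul_mem _ _ hw'mem), hcomp⟩
      have hiter := int_iter p hxp a (a + 1) (by omega) _ hkey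
      rw [Nat.add_sub_cancel_left, pow_one] at hiter
      -- xi • v ∈ (J ⊔ span{x1} ⊔ spanL p) • ⊤
      have hxiv : xi • v ∈ (J ⊔ Ideal.span {x1} ⊔ spanL p) • (⊤ : Submodule R M) := by
        have hx1u : x1 • u ∈ (J ⊔ Ideal.span {x1} ⊔ spanL p) • (⊤ : Submodule R M) :=
          mem_three.mpr ⟨0, zero_mem _, u, 0, zero_mem _, by abel⟩
        have : xi • v = (xi • v - x1 • u) + x1 • u := by abel
        rw [this]
        exact add_mem hiter hx1u
      obtain ⟨f, hf, g, hh, hhmem, hveq⟩ := mem_three.mp (horig v hxiv)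
      refine mem_three.mpr ⟨e' + x1 ^ a • f, add_mem he' (Submodule.smul_mem _ _ hf), g,
        x1 ^ a • hh + w', add_mem (Submodule.smul_mem _ _ hhmem) hw'mem, ?_⟩
      rw [hzeq, hveq, smul_add, smul_add, smul_smul, ← pow_succ]
      abel

lemma regOverL_powers {J : Ideal R} {l : List R} (h : RegOverL M J l) {n : ℕ} (hn : 1 ≤ n) :
    RegOverL M J (l.map (· ^ n)) := by
  induction l generalizing J with
  | nil => trivial
  | cons x1 l ih =>
    exact ⟨fun z hz => reg_pow_head h.1 n z hz, ih (raise h n hn)⟩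

lemma pow_smul_up {y : R} {t t' : ℕ} (h : t ≤ t') {u : M} {S : Submodule R M}
    (hu : y ^ t • u ∈ S) : y ^ t' • u ∈ S := by
  have he : t' - t + t = t' := by omega
  have : y ^ t' • u = y ^ (t' - t) • (y ^ t • u) := by
    rw [smul_smul, ← pow_add, he]
  rw [this]
  exact Submodule.smul_mem _ _ hu

lemma bt_lemma (y : R) : ∀ (l : List R) (J : Ideal R), RegOverL M J l →
    (∃ c, ∀ t (u : M), y ^ t • u ∈ (J ⊔ spanL l) • (⊤ : Submodule R M) →
      y ^ c • u ∈ (J ⊔ spanL l) • (⊤ : Submodule R M)) →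
    ∀ n, 1 ≤ n → ∃ N, ∀ t (u : M),
      y ^ t • u ∈ (J ⊔ spanL (l.map (· ^ n))) • (⊤ : Submodule R M) →
      y ^ N • u ∈ (J ⊔ spanL (l.map (· ^ n))) • (⊤ : Submodule R M) := by
  intro l
  induction l with
  | nil => intro J _ hc n _; simpa using hc
  | cons x1 l ih =>
    intro J h hc n hn
    obtain ⟨c, hc⟩ := hc
    -- bounded torsion over J ⊔ span{x1} for the tail
    have hc' : ∃ c, ∀ t (u : M),
        y ^ t • u ∈ (J ⊔ Ideal.span {x1} ⊔ spanL l) • (⊤ : Submodule R M) →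
        y ^ c • u ∈ (J ⊔ Ideal.span {x1} ⊔ spanL l) • (⊤ : Submodule R M) := by
      refine ⟨c, fun t u hu => ?_⟩
      rw [sup_assoc, ← spanL_cons] at hu ⊢
      exact hc t u hu
    obtain ⟨N1, hN1⟩ := ih (J ⊔ Ideal.span {x1}) h.2 hc' n hn
    -- the sequence x1 :: l.map (·^n) is regular over J
    have hregpow : RegOverL M J (x1 :: l.map (· ^ n)) := ⟨h.1, regOverL_powers h.2 hn⟩
    -- inner claim by induction on the exponent a of x1
    have claim : ∀ a, 1 ≤ a → ∃ Na, ∀ t (u : M),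
        y ^ t • u ∈ (J ⊔ Ideal.span {x1 ^ a} ⊔ spanL (l.map (· ^ n))) • (⊤ : Submodule R M) →
        y ^ Na • u ∈
          (J ⊔ Ideal.span {x1 ^ a} ⊔ spanL (l.map (· ^ n))) • (⊤ : Submodule R M) := by
      intro a ha
      induction a with
      | zero => omega
      | succ a iha =>
        rcases Nat.eq_zero_or_pos a with rfl | ha'
        · refine ⟨N1, fun t u hu => ?_⟩
          rw [zero_add, pow_one] at hu ⊢
          exact hN1 t u hu
        · obtain ⟨Na, hNa⟩ := iha ha'
          refine ⟨Na + N1, fun t u hu => ?_⟩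
          -- WLOG t is large
          set t' := max t Na with ht'
          have hu' : y ^ t' • u ∈
              (J ⊔ Ideal.span {x1 ^ (a + 1)} ⊔ spanL (l.map (· ^ n))) • (⊤ : Submodule R M) :=
            pow_smul_up (le_max_left _ _) hu
          have hle : Ideal.span {x1 ^ (a + 1)} ≤ Ideal.span {x1 ^ a} :=
            Ideal.span_singleton_le_span_singleton.mpr (pow_dvd_pow x1 (by omega))
          have hu'' : y ^ t' • u ∈
              (J ⊔ Ideal.span {x1 ^ a} ⊔ spanL (l.map (· ^ n))) • (⊤ : Submodule R M) :=
            Submodule.smul_mono_left (sup_le_sup_right (sup_le_sup_left hle J) _) hu'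
          obtain ⟨e, he, v, w, hw, hNaeq⟩ := mem_three.mp (hNa t' u hu'')
          obtain ⟨e2, he2, v2, w2, hw2, ht'eq⟩ := mem_three.mp hu'
          have hup : y ^ t' • u =
              y ^ (t' - Na) • e + x1 ^ a • (y ^ (t' - Na) • v) + y ^ (t' - Na) • w := by
            have hee : t' - Na + Na = t' := by omega
            have : y ^ t' • u = y ^ (t' - Na) • (y ^ Na • u) := by
              rw [smul_smul, ← pow_add, hee]
            rw [this, hNaeq, smul_add, smul_add, smul_comm (y ^ (t' - Na)) (x1 ^ a) v]
          have hkey : x1 ^ a • (y ^ (t' - Na) • v - x1 • v2) ∈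
              (J ⊔ Ideal.span {x1 ^ (a + 1)} ⊔ spanL (l.map (· ^ n))) •
                (⊤ : Submodule R M) := by
            have h2 : x1 ^ a • (x1 • v2) = x1 ^ (a + 1) • v2 := by
              rw [smul_smul, ← pow_succ]
            have hcomp : x1 ^ a • (y ^ (t' - Na) • v - x1 • v2) =
                (e2 - y ^ (t' - Na) • e) + x1 ^ (a + 1) • (0 : M)
                  + (w2 - y ^ (t' - Na) • w) := by
              calc x1 ^ a • (y ^ (t' - Na) • v - x1 • v2)
                  = (y ^ (t' - Na) • e + x1 ^ a • (y ^ (t' - Na) • v) + y ^ (t' - Na) • w)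
                      - y ^ (t' - Na) • e - y ^ (t' - Na) • w - x1 ^ (a + 1) • v2 := by
                    rw [smul_sub, h2]; abel
                _ = (e2 + x1 ^ (a + 1) • v2 + w2)
                      - y ^ (t' - Na) • e - y ^ (t' - Na) • w - x1 ^ (a + 1) • v2 := by
                    rw [← hup, ← ht'eq]
                _ = (e2 - y ^ (t' - Na) • e) + x1 ^ (a + 1) • (0 : M)
                      + (w2 - y ^ (t' - Na) • w) := by
                    rw [smul_zero]; abel
            exact mem_three.mpr ⟨e2 - y ^ (t' - Na) • e,
              sub_mem he2 (Submodule.smul_mem _ _ he), (0 : M),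
              w2 - y ^ (t' - Na) • w, sub_mem hw2 (Submodule.smul_mem _ _ hw), hcomp⟩
          have hiter := int_iter _ hregpow a (a + 1) (by omega) _ hkey
          rw [Nat.add_sub_cancel_left, pow_one] at hiter
          have hyv : y ^ (t' - Na) • v ∈
              (J ⊔ Ideal.span {x1} ⊔ spanL (l.map (· ^ n))) • (⊤ : Submodule R M) := by
            have hx1v2 : x1 • v2 ∈
                (J ⊔ Ideal.span {x1} ⊔ spanL (l.map (· ^ n))) • (⊤ : Submodule R M) :=
              mem_three.mpr ⟨0, zero_mem _, v2, 0, zero_mem _, by abel⟩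
            have : y ^ (t' - Na) • v = (y ^ (t' - Na) • v - x1 • v2) + x1 • v2 := by abel
            rw [this]
            exact add_mem hiter hx1v2
          have hyvN1 : y ^ N1 • v ∈
              (J ⊔ Ideal.span {x1} ⊔ spanL (l.map (· ^ n))) • (⊤ : Submodule R M) := by
            exact hN1 (t' - Na) v hyv
          obtain ⟨f, hf, g, hh, hhmem, hveq⟩ := mem_three.mp hyvN1
          refine mem_three.mpr ⟨y ^ N1 • e + x1 ^ a • f,
            add_mem (Submodule.smul_mem _ _ he) (Submodule.smul_mem _ _ hf), g,
            x1 ^ a • hh + y ^ N1 • w,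
            add_mem (Submodule.smul_mem _ _ hhmem) (Submodule.smul_mem _ _ hw), ?_⟩
          have hfinal : y ^ (Na + N1) • u = y ^ N1 • (y ^ Na • u) := by
            have hee2 : N1 + Na = Na + N1 := by omega
            rw [smul_smul, ← pow_add, hee2]
          rw [hfinal, hNaeq, smul_add, smul_add, smul_comm (y ^ N1) (x1 ^ a) v, hveq,
            smul_add, smul_add, smul_smul, ← pow_succ]
          abel
    obtain ⟨N, hN⟩ := claim n hn
    refine ⟨N, fun t u hu => ?_⟩
    have hrw : spanL ((x1 :: l).map (· ^ n)) = Ideal.span {x1 ^ n} ⊔ spanL (l.map (· ^ n)) := by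
      rw [List.map_cons, spanL_cons]
    rw [hrw, ← sup_assoc] at hu ⊢
    exact hN t u hu

lemma mem_take_ofFn {α : Type*} {k : ℕ} (i : ℕ) (f : Fin k → α) (a : α) :
    a ∈ (List.ofFn f).take i ↔ ∃ j : Fin k, j.1 < i ∧ f j = a := by
  rw [List.mem_take_iff_getElem]
  constructor
  · rintro ⟨m, hm, rfl⟩
    rw [List.length_ofFn, min_comm] at hm
    have hmk : m < k := lt_of_lt_of_le hm (min_le_left _ _)
    have hmi : m < i := lt_of_lt_of_le hm (min_le_right _ _)
    exact ⟨⟨m, hmk⟩, hmi, by simp⟩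
  · rintro ⟨j, hj, rfl⟩
    refine ⟨j.1, ?_, by simp⟩
    rw [List.length_ofFn]
    omega

lemma spanL_take_ofFn {k : ℕ} (f : Fin k → R) (i : ℕ) :
    spanL ((List.ofFn f).take i) = Ideal.span (f '' {j : Fin k | (j : ℕ) < i}) := by
  unfold spanL
  congr 1
  ext a
  rw [Set.mem_setOf_eq, mem_take_ofFn]
  constructor
  · rintro ⟨j, hj, rfl⟩
    exact ⟨j, hj, rfl⟩
  · rintro ⟨j, hj, rfl⟩
    exact ⟨j, hj, rfl⟩

lemma spanL_ofFn {k : ℕ} (f : Fin k → R) :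
    spanL (List.ofFn f) = Ideal.span (Set.range f) := by
  unfold spanL
  congr 1
  ext a
  rw [Set.mem_setOf_eq, List.mem_ofFn]
  exact Iff.rfl

lemma regOverL_ofFn {k : ℕ} {x : Fin k → R} (hreg : IsRegularSeq M x) :
    RegOverL M ⊥ (List.ofFn x) := by
  apply regOverL_of_split
  intro p a l' hsplit z hz
  have hlen : p.length < k := by
    have := congrArg List.length hsplit
    simp at this
    omega
  have hlen' : p.length < (List.ofFn x).length := by
    rw [List.length_ofFn]; exact hlen
  have hpa : x ⟨p.length, hlen⟩ = a := by
    have h1 : (List.ofFn x)[p.length]'hlen' = a := by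
      simp only [hsplit]
      rw [List.getElem_append_right (le_refl _)]
      simp
    rw [← h1, List.getElem_ofFn]
  have hptake : p = (List.ofFn x).take p.length := by rw [hsplit, List.take_left]
  have hspan : (⊥ : Ideal R) ⊔ spanL p =
      Ideal.span (x '' {j : Fin k | j < (⟨p.length, hlen⟩ : Fin k)}) := by
    rw [bot_sup_eq]
    conv_lhs => rw [hptake]
    rw [spanL_take_ofFn x p.length]
    rfl
  rw [hspan] at hz ⊢
  rw [← hpa] at hz
  exact hreg ⟨p.length, hlen⟩ z hz

lemma image_lt_castSucc {α : Type*} {k : ℕ} (g : Fin (k + 1) → α) (i' : Fin k) :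
    g '' {j | j < Fin.castSucc i'} = (fun j => g (Fin.castSucc j)) '' {j : Fin k | j < i'} := by
  ext a
  simp only [Set.mem_image, Set.mem_setOf_eq]
  constructor
  · rintro ⟨j, hj, rfl⟩
    have hj' : (j : ℕ) < (i' : ℕ) := hj
    exact ⟨⟨j.1, lt_trans hj' i'.isLt⟩, hj', congrArg g (Fin.ext rfl)⟩
  · rintro ⟨j', hj', rfl⟩
    exact ⟨Fin.castSucc j', Fin.castSucc_lt_castSucc_iff.mpr hj', rfl⟩

lemma image_lt_last {α : Type*} {k : ℕ} (g : Fin (k + 1) → α) :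
    g '' {j | j < Fin.last k} = Set.range (fun j : Fin k => g (Fin.castSucc j)) := by
  ext a
  simp only [Set.mem_image, Set.mem_setOf_eq, Set.mem_range]
  constructor
  · rintro ⟨j, hj, rfl⟩
    have hj' : (j : ℕ) < k := hj
    exact ⟨⟨j.1, hj'⟩, congrArg g (Fin.ext rfl)⟩
  · rintro ⟨j', rfl⟩
    exact ⟨Fin.castSucc j', Fin.castSucc_lt_last j', rfl⟩

end ProregularAux

/-- If `x` is an `M`-regular sequence and `M/xM` is of bounded `y`-torsion, then
the sequence `x_1,…,x_k,y` is `M`-proregular. -/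
theorem isProregular_snoc {R : Type*} [CommRing R]
    {M : Type*} [AddCommGroup M] [Module R M] {k : ℕ} (x : Fin k → R) (y : R)
    (hreg : IsRegularSeq M x)
    (hbdd : ∃ c : ℕ, ∀ m : ℕ, c ≤ m →
      ((Ideal.span (Set.range x)) • (⊤ : Submodule R M)).comap (LinearMap.lsmul R M (y ^ m)) =
        ((Ideal.span (Set.range x)) • (⊤ : Submodule R M)).comap (LinearMap.lsmul R M (y ^ c))) :
    IsProregular M (Fin.snoc x y) := by
  obtain ⟨c, hc⟩ := hbdd
  have hxreg : RegOverL M ⊥ (List.ofFn x) := regOverL_ofFn hreg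
  intro i n
  rcases Nat.eq_zero_or_pos n with rfl | hn
  · exact ⟨0, le_rfl, le_rfl⟩
  · induction i using Fin.lastCases with
    | cast i' =>
      refine ⟨n, le_rfl, ?_⟩
      intro u hu
      simp only [Submodule.mem_comap, LinearMap.lsmul_apply] at hu ⊢
      rw [Nat.sub_self, pow_zero, one_smul]
      rw [image_lt_castSucc] at hu ⊢
      simp only [Fin.snoc_castSucc] at hu ⊢
      -- hu : x i' ^ n • u ∈ span ((fun j => x j ^ n) '' {j | j < i'}) • ⊤
      have hmap : (List.ofFn x).map (· ^ n) = List.ofFn (fun j : Fin k => x j ^ n) := by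
        rw [List.map_ofFn]; rfl
      have hpow : RegOverL M ⊥ (List.ofFn (fun j : Fin k => x j ^ n)) := by
        rw [← hmap]; exact regOverL_powers hxreg hn
      have hlenf : (i' : ℕ) < (List.ofFn (fun j : Fin k => x j ^ n)).length := by
        rw [List.length_ofFn]; exact i'.isLt
      have h1 : (List.ofFn (fun j : Fin k => x j ^ n))[(i' : ℕ)]'hlenf = x i' ^ n := by
        rw [List.getElem_ofFn]
      have hsplit2 : List.ofFn (fun j : Fin k => x j ^ n) =
          (List.ofFn (fun j : Fin k => x j ^ n)).take i'.1 ++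
            (x i' ^ n) :: (List.ofFn (fun j : Fin k => x j ^ n)).drop (i'.1 + 1) := by
        rw [← h1, List.getElem_cons_drop, List.take_append_drop]
      have hs := regOverL_split hpow _ _ _ hsplit2 u
      have hid : (⊥ : Ideal R) ⊔ spanL ((List.ofFn (fun j : Fin k => x j ^ n)).take i'.1) =
          Ideal.span ((fun j : Fin k => x j ^ n) '' {j | j < i'}) := by
        rw [bot_sup_eq, spanL_take_ofFn]
        rfl
      rw [hid] at hs
      exact hs hu
    | last =>
      -- bounded torsion hypothesis, elementwise
      have hbt : ∃ c0, ∀ t (u : M),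
          y ^ t • u ∈ ((⊥ : Ideal R) ⊔ spanL (List.ofFn x)) • (⊤ : Submodule R M) →
          y ^ c0 • u ∈ ((⊥ : Ideal R) ⊔ spanL (List.ofFn x)) • (⊤ : Submodule R M) := by
        refine ⟨c, fun t u hu => ?_⟩
        rw [bot_sup_eq, spanL_ofFn] at hu ⊢
        by_cases htc : c ≤ t
        · have heq := hc t htc
          have hmem : u ∈ (Ideal.span (Set.range x) • (⊤ : Submodule R M)).comap
              (LinearMap.lsmul R M (y ^ t)) := by
            rw [Submodule.mem_comap, LinearMap.lsmul_apply]
            exact hu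
          rw [heq, Submodule.mem_comap, LinearMap.lsmul_apply] at hmem
          exact hmem
        · exact pow_smul_up (by omega) hu
      obtain ⟨N, hN⟩ := bt_lemma y (List.ofFn x) ⊥ hxreg hbt n hn
      refine ⟨n + N, by omega, ?_⟩
      intro u hu
      simp only [Submodule.mem_comap, LinearMap.lsmul_apply] at hu ⊢
      rw [Fin.snoc_last] at hu ⊢
      rw [image_lt_last] at hu ⊢
      simp only [Fin.snoc_castSucc] at hu ⊢
      have hee : n + N - n = N := by omega
      rw [hee]
      -- pass from exponent n + N to exponent n
      have hr1 : Ideal.span (Set.range fun j : Fin k => x j ^ (n + N)) ≤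
          (⊥ : Ideal R) ⊔ spanL ((List.ofFn x).map (· ^ n)) := by
        rw [bot_sup_eq]
        apply Ideal.span_le.mpr
        rintro a ⟨j, rfl⟩
        have hgen : x j ^ n ∈ spanL ((List.ofFn x).map (· ^ n)) := by
          apply Ideal.subset_span
          simp only [Set.mem_setOf_eq, List.mem_map]
          exact ⟨x j, by simp [List.mem_ofFn], rfl⟩
        have : x j ^ (n + N) = x j ^ N * x j ^ n := by
          rw [← pow_add, Nat.add_comm]
        show x j ^ (n + N) ∈ spanL ((List.ofFn x).map (· ^ n))
        rw [this]
        exact Ideal.mul_mem_left _ _ hgen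
      have hu' : y ^ (n + N) • u ∈
          (((⊥ : Ideal R) ⊔ spanL ((List.ofFn x).map (· ^ n))) • (⊤ : Submodule R M)) :=
        Submodule.smul_mono_left hr1 hu
      have hres := hN (n + N) u hu'
      have hr2 : (⊥ : Ideal R) ⊔ spanL ((List.ofFn x).map (· ^ n)) =
          Ideal.span (Set.range fun j : Fin k => x j ^ n) := by
        have hmap : (List.ofFn x).map (· ^ n) = List.ofFn (fun j : Fin k => x j ^ n) := by
          rw [List.map_ofFn]; rfl
        rw [bot_sup_eq, hmap, spanL_ofFn]
      rwa [hr2] at hres
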